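/- Let X be a probability distribution on {0,1}^{n1} and f : {0,1}^{n1} → {0,1}^{n2} a function such that the pushforward Y = f(X) is an (n2,k)-source (k a natural number). Then there exist a natural number m, flat (n1,k)-sources X_1, ..., X_m (each uniform on a subset of {0,1}^{n1} of size 2^k), functions f_1, ..., f_m : {0,1}^{n1} → {0,1}^{n2} each of which is injective on the support of the corresponding X_i, and positive reals v_1, ..., v_m with Σ_i v_i = 1, such that X = Σ_i v_i X_i and, for every i, the pushforward distributions f(X_i) and f_i(X_i) are equal. -/

import Mathlib

open Finset
open scoped Classical

noncomputable section

abbrev BS (n : ℕ) := Fin n → Bool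

def uniformD (α : Type*) [Fintype α] : α → ℝ := fun _ => (Fintype.card α : ℝ)⁻¹

def prodD {α β : Type*} (p : α → ℝ) (q : β → ℝ) : α × β → ℝ := fun z => p z.1 * q z.2

def pushD {α β : Type*} [Fintype α] (f : α → β) (p : α → ℝ) : β → ℝ :=
  fun b => ∑ a, if f a = b then p a else 0

def SD {α : Type*} [Fintype α] (p q : α → ℝ) : ℝ := (∑ a, |p a - q a|) / 2

def IsDist {α : Type*} [Fintype α] (p : α → ℝ) : Prop := (∀ a, 0 ≤ p a) ∧ ∑ a, p a = 1

def mEntGe {α : Type*} (p : α → ℝ) (k : ℝ) : Prop := ∀ a, p a ≤ (2:ℝ) ^ (-k)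

def IsNME {X Y M : Type*} [Fintype X] [Fintype Y] [Fintype M]
    (E : X → Y → M) (k ε : ℝ) : Prop :=
  ∀ μX : X → ℝ, IsDist μX → mEntGe μX k →
    ∀ A : Y → Y, (∀ y, A y ≠ y) →
      SD (pushD (fun xy : X × Y => (E xy.1 xy.2, E xy.1 (A xy.2), xy.2)) (prodD μX (uniformD Y)))
         (prodD (uniformD M)
           (pushD (fun xy : X × Y => (E xy.1 (A xy.2), xy.2)) (prodD μX (uniformD Y)))) ≤ ε

def IsNMEr {X Y M : Type*} [Fintype X] [Fintype Y] [Fintype M]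
    (r : ℕ) (E : X → Y → M) (k ε : ℝ) : Prop :=
  ∀ μX : X → ℝ, IsDist μX → mEntGe μX k →
    ∀ A : Fin r → Y → Y, (∀ i y, A i y ≠ y) →
      SD (pushD (fun xy : X × Y =>
            (E xy.1 xy.2, fun i => E xy.1 (A i xy.2), xy.2)) (prodD μX (uniformD Y)))
         (prodD (uniformD M)
           (pushD (fun xy : X × Y =>
             ((fun i => E xy.1 (A i xy.2)), xy.2)) (prodD μX (uniformD Y)))) ≤ ε

/-- A flat source with min-entropy `k`: the uniform distribution over a subset of size `2^k`. -/
def IsFlat {α : Type*} [Fintype α] (k : ℕ) (μ : α → ℝ) : Prop :=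
  ∃ S : Finset α, S.card = 2 ^ k ∧ ∀ a, μ a = if a ∈ S then ((2:ℝ) ^ k)⁻¹ else 0

section DecompAux
set_option linter.unusedSectionVars false

open Finset
open scoped Classical

variable {α β : Type*} [Fintype α] [Fintype β]

lemma pushD_nonneg (f : α → β) {μ : α → ℝ} (h : ∀ a, 0 ≤ μ a) (y : β) :
    0 ≤ pushD f μ y :=
  Finset.sum_nonneg fun a _ => by split_ifs; exacts [h a, le_rfl]

lemma sum_pushD (f : α → β) (μ : α → ℝ) : ∑ y, pushD f μ y = ∑ a, μ a := by
  unfold pushD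
  rw [Finset.sum_comm]
  simp

lemma le_pushD (f : α → β) {μ : α → ℝ} (h : ∀ a, 0 ≤ μ a) (x : α) :
    μ x ≤ pushD f μ (f x) := by
  have := Finset.single_le_sum (f := fun a => if f a = f x then μ a else 0)
    (fun a _ => by
      show (0:ℝ) ≤ if f a = f x then μ a else 0
      split_ifs; exacts [h a, le_rfl]) (Finset.mem_univ x)
  simpa [pushD] using this

lemma exists_preimage (f : α → β) (μ : α → ℝ) {y : β} (h : pushD f μ y ≠ 0) :
    ∃ x, f x = y ∧ μ x ≠ 0 := by
  by_contra hc
  push_neg at hc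
  apply h
  unfold pushD
  refine Finset.sum_eq_zero fun a _ => ?_
  split_ifs with hf
  · exact hc a hf
  · rfl

/-- Termination measure: support size plus number of non-tight pushforward values. -/
def measN (f : α → β) (k : ℕ) (μ : α → ℝ) : ℕ :=
  (univ.filter (fun a => μ a ≠ 0)).card +
  (univ.filter (fun y => pushD f μ y ≠ ((2:ℝ)^k)⁻¹)).card

lemma decomp_aux (f : α → β) (k : ℕ) :
    ∀ N (μ : α → ℝ), measN f k μ ≤ N → IsDist μ →
    (∀ y, pushD f μ y ≤ ((2:ℝ)^k)⁻¹) →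
    ∃ (m : ℕ) (Xi : Fin m → (α → ℝ)) (v : Fin m → ℝ),
      (∀ i, 0 < v i) ∧ (∑ i, v i = 1) ∧ (∀ i, IsFlat k (Xi i)) ∧
      (∀ i, Set.InjOn f {a | Xi i a ≠ 0}) ∧
      (∀ a, μ a = ∑ i, v i * Xi i a) := by

  intro N
  induction N with
  | zero =>
    intro mu hm hd _
    exfalso
    have hne : (univ.filter (fun a => mu a ≠ 0)).Nonempty := by
      by_contra hc
      rw [Finset.not_nonempty_iff_eq_empty, Finset.filter_eq_empty_iff] at hc
      have : ∑ a, mu a = 0 := Finset.sum_eq_zero fun a ha => by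
        have := hc ha; simpa using this
      rw [hd.2] at this; norm_num at this
    have := Finset.card_pos.2 hne
    unfold measN at hm
    omega
  | succ N ih =>
    intro mu hm hd hple
    set c : ℝ := ((2:ℝ)^k)⁻¹ with hc_def
    have hc : 0 < c := by positivity
    have hcard_c : (2:ℝ)^k * c = 1 := by
      rw [hc_def]; field_simp
    set p : β → ℝ := pushD f mu with hp_def
    have hpnn : ∀ y, 0 ≤ p y := fun y => pushD_nonneg f hd.1 y
    have hpsum : ∑ y, p y = 1 := by rw [hp_def, sum_pushD, hd.2]
    set Pos : Finset β := univ.filter (fun y => p y ≠ 0) with hPos_def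
    set T : Finset β := univ.filter (fun y => p y = c) with hT_def
    have hTPos : T ⊆ Pos := by
      intro y hy
      simp only [hT_def, Finset.mem_filter, Finset.mem_univ, true_and] at hy
      simp only [hPos_def, Finset.mem_filter, Finset.mem_univ, true_and]
      rw [hy]; exact ne_of_gt hc
    -- |T| ≤ 2^k
    have hTcard : T.card ≤ 2^k := by
      have h1 : (T.card : ℝ) * c ≤ 1 := by
        have : ∑ y ∈ T, p y ≤ ∑ y, p y :=
          Finset.sum_le_sum_of_subset_of_nonneg (Finset.subset_univ T)
            (fun y _ _ => hpnn y)
        rw [hpsum] at this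
        have heq : ∑ y ∈ T, p y = (T.card : ℝ) * c := by
          rw [Finset.sum_congr rfl (fun y hy => by
            simp only [hT_def, Finset.mem_filter] at hy; exact hy.2)]
          simp [mul_comm]
        linarith [heq ▸ this]
      by_contra hlt
      push_neg at hlt
      have h2 : ((2:ℝ)^k + 1) * c ≤ (T.card : ℝ) * c := by
        apply mul_le_mul_of_nonneg_right _ hc.le
        have : ((2^k + 1 : ℕ) : ℝ) ≤ (T.card : ℝ) := by exact_mod_cast hlt
        push_cast at this
        linarith
      have : (2:ℝ)^k * c + c ≤ 1 := by nlinarith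
      rw [hcard_c] at this
      linarith
    -- 2^k ≤ |Pos|
    have hPoscard : 2^k ≤ Pos.card := by
      have h1 : (1:ℝ) ≤ (Pos.card : ℝ) * c := by
        have heq : ∑ y, p y = ∑ y ∈ Pos, p y := by
          symm
          apply Finset.sum_subset (Finset.subset_univ Pos)
          intro y _ hy
          simp only [hPos_def, Finset.mem_filter, Finset.mem_univ, true_and] at hy
          push_neg at hy
          exact hy
        have hle : ∑ y ∈ Pos, p y ≤ ∑ y ∈ Pos, c :=
          Finset.sum_le_sum fun y _ => hple y
        rw [Finset.sum_const, nsmul_eq_mul] at hle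
        rw [hpsum] at heq
        linarith [heq ▸ hle]
      by_contra hlt
      push_neg at hlt
      have h2 : (Pos.card : ℝ) * c < (2:ℝ)^k * c := by
        apply mul_lt_mul_of_pos_right _ hc
        exact_mod_cast hlt
      rw [hcard_c] at h2
      linarith
    obtain ⟨Yh, hTY, hYPos, hYcard⟩ :=
      Finset.exists_subsuperset_card_eq hTPos hTcard hPoscard
    have hYne : Yh.Nonempty := by
      rw [← Finset.card_pos, hYcard]; positivity
    -- nonemptiness of α
    have hane : Nonempty α := by
      by_contra hc2
      simp only [not_nonempty_iff] at hc2
      have : ∑ a, mu a = 0 := by simp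
      rw [hd.2] at this; norm_num at this
    -- choice of preimages
    let xc : β → α := fun y =>
      if h : ∃ x, f x = y ∧ mu x ≠ 0 then h.choose else Classical.arbitrary α
    have hxc : ∀ y ∈ Yh, f (xc y) = y ∧ mu (xc y) ≠ 0 := by
      intro y hy
      have hyPos : p y ≠ 0 := by
        have := hYPos hy
        simpa [hPos_def] using this
      have hex : ∃ x, f x = y ∧ mu x ≠ 0 := exists_preimage f mu hyPos
      simp only [xc, dif_pos hex]
      exact hex.choose_spec
    have hxcf : ∀ y ∈ Yh, f (xc y) = y := fun y hy => (hxc y hy).1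
    have hxcpos : ∀ y ∈ Yh, 0 < mu (xc y) :=
      fun y hy => lt_of_le_of_ne (hd.1 _) (Ne.symm (hxc y hy).2)
    have hxcinj : ∀ x1 ∈ Yh, ∀ x2 ∈ Yh, xc x1 = xc x2 → x1 = x2 := by
      intro y1 h1 y2 h2 he
      rw [← hxcf y1 h1, ← hxcf y2 h2, he]
    set S : Finset α := Yh.image xc with hS_def
    have hScard : S.card = 2^k := by
      rw [hS_def, Finset.card_image_of_injOn hxcinj, hYcard]
    have hmemS : ∀ x ∈ S, ∃ y ∈ Yh, xc y = x := by
      intro x hx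
      simpa [hS_def] using hx
    have hfS_inj : ∀ x1 ∈ S, ∀ x2 ∈ S, f x1 = f x2 → x1 = x2 := by
      intro x1 h1 x2 h2 hf
      obtain ⟨y1, hy1, he1⟩ := hmemS x1 h1
      obtain ⟨y2, hy2, he2⟩ := hmemS x2 h2
      subst he1; subst he2
      rw [hxcf y1 hy1, hxcf y2 hy2] at hf
      rw [hf]
    set unifS : α → ℝ := fun x => if x ∈ S then c else 0 with hunifS_def
    have hunifS_nn : ∀ x, 0 ≤ unifS x := by
      intro x; simp only [hunifS_def]; split_ifs; exacts [hc.le, le_rfl]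
    have hunifS_sum : ∑ x, unifS x = 1 := by
      rw [hunifS_def]
      rw [Finset.sum_ite_mem, Finset.univ_inter, Finset.sum_const, hScard,
        nsmul_eq_mul]
      push_cast
      exact hcard_c
    have hflatS : IsFlat k unifS := ⟨S, hScard, fun a => rfl⟩
    have hsuppS : {a | unifS a ≠ 0} = (S : Set α) := by
      ext a
      simp only [hunifS_def, Set.mem_setOf_eq, Finset.mem_coe]
      constructor
      · intro h; by_contra hx; simp [hx] at h
      · intro h; simp only [if_pos h]; exact ne_of_gt hc
    have hinjS : Set.InjOn f {a | unifS a ≠ 0} := by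
      rw [hsuppS]
      intro x1 h1 x2 h2 hf
      exact hfS_inj x1 h1 x2 h2 hf
    -- pushforward of unifS
    have hpush_unif : ∀ y, pushD f unifS y = if y ∈ Yh then c else 0 := by
      intro y
      have e1 : pushD f unifS y = ∑ x ∈ S, if f x = y then c else 0 := by
        unfold pushD
        rw [← Finset.sum_subset (Finset.subset_univ S)]
        · apply Finset.sum_congr rfl
          intro x hx
          simp only [hunifS_def, if_pos hx]
        · intro x _ hx
          simp only [hunifS_def, if_neg hx, ite_self]
      rw [e1, hS_def, Finset.sum_image hxcinj]
      have e2 : ∀ y' ∈ Yh, (if f (xc y') = y then c else 0)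
          = if y' = y then c else 0 := by
        intro y' hy'
        rw [hxcf y' hy']
      rw [Finset.sum_congr rfl e2]
      simp [Finset.sum_ite_eq']
    -- the infimum vA over chosen set
    set vA : ℝ := Yh.inf' hYne (fun y => mu (xc y) / c) with hvA_def
    have hvA_pos : 0 < vA := by
      rw [hvA_def, Finset.lt_inf'_iff]
      intro y hy
      exact div_pos (hxcpos y hy) hc
    have hmu_le_p : ∀ y ∈ Yh, mu (xc y) ≤ p y := by
      intro y hy
      have := le_pushD f hd.1 (xc y)
      rwa [hxcf y hy, ← hp_def] at this
    have hvA_le : ∀ y ∈ Yh, vA ≤ mu (xc y) / c :=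
      fun y hy => Finset.inf'_le _ hy
    have hvA_le_one : vA ≤ 1 := by
      obtain ⟨y0, hy0⟩ := hYne
      calc vA ≤ mu (xc y0) / c := hvA_le y0 hy0
        _ ≤ p y0 / c := by
            apply div_le_div_of_nonneg_right (hmu_le_p y0 hy0) hc.le
        _ ≤ c / c := by apply div_le_div_of_nonneg_right (hple y0) hc.le
        _ = 1 := div_self (ne_of_gt hc)
    set B : Finset β := Pos \ Yh with hB_def
    have hB_t_pos : ∀ y ∈ B, 0 < 1 - p y / c := by
      intro y hy
      rw [hB_def, Finset.mem_sdiff] at hy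
      have hyT : y ∉ T := fun h => hy.2 (hTY h)
      have : p y ≠ c := by
        intro h; exact hyT (by simp [hT_def, h])
      have hlt : p y < c := lt_of_le_of_ne (hple y) this
      have : p y / c < 1 := (div_lt_one hc).2 hlt
      linarith
    have hB_p_pos : ∀ y ∈ B, 0 < p y := by
      intro y hy
      rw [hB_def, Finset.mem_sdiff] at hy
      have := hy.1
      simp only [hPos_def, Finset.mem_filter, Finset.mem_univ, true_and] at this
      exact lt_of_le_of_ne (hpnn y) (Ne.symm this)
    by_cases hbase : Pos ⊆ Yh ∧ ∀ y ∈ Yh, c ≤ mu (xc y)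
    · -- base case: mu is exactly unifS
      obtain ⟨hPY, hceq⟩ := hbase
      have hxc_eq : ∀ y ∈ Yh, mu (xc y) = c :=
        fun y hy => le_antisymm (le_trans (hmu_le_p y hy) (hple y)) (hceq y hy)
      have hsumS : ∑ x ∈ S, mu x = 1 := by
        rw [hS_def, Finset.sum_image hxcinj,
          Finset.sum_congr rfl (fun y hy => hxc_eq y hy),
          Finset.sum_const, hYcard, nsmul_eq_mul]
        push_cast
        exact hcard_c
      have hzero_off : ∀ x, x ∉ S → mu x = 0 := by
        intro x hx
        have hsplit : ∑ x ∈ S, mu x + ∑ x ∈ Sᶜ, mu x = 1 := by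
          rw [Finset.sum_add_sum_compl, hd.2]
        have h0 : ∑ x ∈ Sᶜ, mu x = 0 := by linarith
        have := (Finset.sum_eq_zero_iff_of_nonneg
          (fun x _ => hd.1 x)).1 h0
        exact this x (Finset.mem_compl.2 hx)
      have hmu_eq : ∀ x, mu x = unifS x := by
        intro x
        by_cases hx : x ∈ S
        · obtain ⟨y, hy, he⟩ := hmemS x hx
          rw [hunifS_def]
          simp only [if_pos hx]
          rw [← he]; exact hxc_eq y hy
        · rw [hunifS_def]; simp only [if_neg hx]; exact hzero_off x hx
      refine ⟨1, fun _ => unifS, fun _ => 1, fun _ => one_pos, by simp,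
        fun _ => hflatS, fun _ => hinjS, ?_⟩
      intro a
      simp [hmu_eq a]
    · -- recursive case
      push_neg at hbase
      set v : ℝ :=
        if hB : B.Nonempty then min vA (B.inf' hB (fun y => 1 - p y / c))
        else vA with hv_def
      have hv_le_vA : v ≤ vA := by
        rw [hv_def]; split_ifs; exacts [min_le_left _ _, le_rfl]
      have hv_pos : 0 < v := by
        rw [hv_def]; split_ifs with hB
        · apply lt_min hvA_pos
          rw [Finset.lt_inf'_iff]
          exact hB_t_pos
        · exact hvA_pos
      have hvB : ∀ y ∈ B, v ≤ 1 - p y / c := by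
        intro y hy
        have hB : B.Nonempty := ⟨y, hy⟩
        rw [hv_def, dif_pos hB]
        exact le_trans (min_le_right _ _) (Finset.inf'_le _ hy)
      have hv_lt_one : v < 1 := by
        by_cases hPB : Pos ⊆ Yh
        · obtain ⟨y0, hy0, hlt⟩ := hbase hPB
          have h1 : vA < 1 := by
            have := hvA_le y0 hy0
            have h2 : mu (xc y0) / c < 1 := (div_lt_one hc).2 hlt
            linarith
          linarith [hv_le_vA]
        · obtain ⟨y0, hy0P, hy0Y⟩ := Finset.not_subset.1 hPB
          have hy0B : y0 ∈ B := Finset.mem_sdiff.2 ⟨hy0P, hy0Y⟩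
          have := hvB y0 hy0B
          have hp0 : 0 < p y0 / c := div_pos (hB_p_pos y0 hy0B) hc
          linarith
      have h1v : 0 < 1 - v := by linarith
      have hvc_le : ∀ x ∈ S, v * c ≤ mu x := by
        intro x hx
        obtain ⟨y, hy, he⟩ := hmemS x hx
        have := le_trans hv_le_vA (hvA_le y hy)
        rw [← he]
        calc v * c ≤ (mu (xc y) / c) * c := by
              apply mul_le_mul_of_nonneg_right this hc.le
          _ = mu (xc y) := by field_simp
      set mu' : α → ℝ := fun x => (mu x - v * unifS x) / (1 - v) with hmu'_def
      have hmu'_nn : ∀ x, 0 ≤ mu' x := by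
        intro x
        rw [hmu'_def]
        apply div_nonneg _ h1v.le
        by_cases hx : x ∈ S
        · have := hvc_le x hx
          simp only [hunifS_def, if_pos hx]
          linarith
        · simp only [hunifS_def, if_neg hx]
          have := hd.1 x
          linarith
      have hmu'_sum : ∑ x, mu' x = 1 := by
        rw [hmu'_def]
        rw [← Finset.sum_div, Finset.sum_sub_distrib, ← Finset.mul_sum,
          hd.2, hunifS_sum, mul_one]
        field_simp
      have hmu'_dist : IsDist mu' := ⟨hmu'_nn, hmu'_sum⟩
      have hrecon : ∀ x, mu x = v * unifS x + (1 - v) * mu' x := by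
        intro x
        rw [hmu'_def]
        field_simp
        ring
      -- pushforward of mu'
      have hpush' : ∀ y, pushD f mu' y
          = (p y - v * (if y ∈ Yh then c else 0)) / (1 - v) := by
        intro y
        have e1 : ∀ a, (if f a = y then mu' a else 0)
            = ((if f a = y then mu a else 0)
                - v * (if f a = y then unifS a else 0)) / (1 - v) := by
          intro a
          split_ifs with h
          · rw [hmu'_def]
          · simp
        calc pushD f mu' y = ∑ a, ((if f a = y then mu a else 0)
              - v * (if f a = y then unifS a else 0)) / (1 - v) := by
              unfold pushD
              exact Finset.sum_congr rfl fun a _ => e1 a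
          _ = (p y - v * pushD f unifS y) / (1 - v) := by
              rw [← Finset.sum_div, Finset.sum_sub_distrib, ← Finset.mul_sum]
              rfl
          _ = (p y - v * (if y ∈ Yh then c else 0)) / (1 - v) := by
              rw [hpush_unif]
      have hple' : ∀ y, pushD f mu' y ≤ c := by
        intro y
        rw [hpush', div_le_iff₀ h1v]
        by_cases hy : y ∈ Yh
        · rw [if_pos hy]
          have := hple y
          nlinarith
        · rw [if_neg hy]
          by_cases hyP : y ∈ Pos
          · have hyB : y ∈ B := Finset.mem_sdiff.2 ⟨hyP, hy⟩
            have := hvB y hyB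
            have h2 : p y / c ≤ 1 - v := by linarith
            have h3 : p y ≤ c * (1 - v) := by
              rw [div_le_iff₀ hc] at h2
              linarith
            linarith
          · have : p y = 0 := by
              by_contra hne
              exact hyP (by simp [hPos_def, hne])
            rw [this]
            nlinarith
      -- support shrinks (weakly)
      have hsupp_sub : (univ.filter (fun a => mu' a ≠ 0))
          ⊆ (univ.filter (fun a => mu a ≠ 0)) := by
        intro x hx
        simp only [Finset.mem_filter, Finset.mem_univ, true_and] at hx ⊢
        intro hmu0
        apply hx
        have hxS : x ∉ S := by
          intro hxS
          have := hvc_le x hxS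
          nlinarith [mul_pos hv_pos hc]
        rw [hmu'_def]
        simp [hmu0, hunifS_def, hxS]
      -- tight set preserved
      have htight_sub : (univ.filter (fun y => pushD f mu' y ≠ c))
          ⊆ (univ.filter (fun y => p y ≠ c)) := by
        intro y hy
        simp only [Finset.mem_filter, Finset.mem_univ, true_and] at hy ⊢
        intro hpc
        apply hy
        have hyT : y ∈ T := by simp [hT_def, hpc]
        have hyY : y ∈ Yh := hTY hyT
        rw [hpush', if_pos hyY, hpc]
        field_simp
      -- strict decrease of the measure
      have hdec : measN f k mu' < measN f k mu := by
        unfold measN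
        rw [← hc_def, ← hp_def]
        by_cases hveq : v = vA
        · -- some support point dies
          obtain ⟨y1, hy1, hinf⟩ := Finset.exists_mem_eq_inf' hYne
            (fun y => mu (xc y) / c)
          have hx1 : mu' (xc y1) = 0 := by
            rw [hmu'_def]
            have hxS : xc y1 ∈ S := Finset.mem_image_of_mem xc hy1
            simp only [hunifS_def, if_pos hxS]
            rw [hveq, hvA_def, hinf]
            field_simp
            simp
          have hx1' : mu (xc y1) ≠ 0 := (hxc y1 hy1).2
          have hss : (univ.filter (fun a => mu' a ≠ 0))
              ⊂ (univ.filter (fun a => mu a ≠ 0)) := by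
            refine Finset.ssubset_iff_of_subset hsupp_sub |>.2 ?_
            exact ⟨xc y1, by simp [hx1'], by simp [hx1]⟩
          have h1 := Finset.card_lt_card hss
          have h2 := Finset.card_le_card htight_sub
          omega
        · -- some y becomes tight
          have hBne : B.Nonempty := by
            by_contra hBe
            rw [hv_def, dif_neg hBe] at hveq
            exact hveq rfl
          have hvmin : v = min vA (B.inf' hBne (fun y => 1 - p y / c)) := by
            rw [hv_def, dif_pos hBne]
          have hvB' : v = B.inf' hBne (fun y => 1 - p y / c) := by
            rcases min_cases vA (B.inf' hBne (fun y => 1 - p y / c)) with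
              ⟨h, _⟩ | ⟨h, _⟩
            · exact absurd (hvmin.trans h) hveq
            · exact hvmin.trans h
          obtain ⟨y1, hy1, hinf⟩ := Finset.exists_mem_eq_inf' hBne
            (fun y => 1 - p y / c)
          have hy1Y : y1 ∉ Yh := (Finset.mem_sdiff.1 hy1).2
          have hp1 : p y1 = c * (1 - v) := by
            have : v = 1 - p y1 / c := by rw [hvB', hinf]
            have h2 : p y1 / c = 1 - v := by linarith
            rw [div_eq_iff (ne_of_gt hc)] at h2
            linarith [h2]
          have htight1 : pushD f mu' y1 = c := by
            rw [hpush', if_neg hy1Y, hp1]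
            field_simp
            ring
          have hnt1 : p y1 ≠ c := by
            rw [hp1]
            intro h
            have : c * (1 - v) < c * 1 := by
              apply mul_lt_mul_of_pos_left _ hc
              linarith
            rw [mul_one] at this
            linarith [h ▸ this]
          have hss : (univ.filter (fun y => pushD f mu' y ≠ c))
              ⊂ (univ.filter (fun y => p y ≠ c)) := by
            refine Finset.ssubset_iff_of_subset htight_sub |>.2 ?_
            exact ⟨y1, by simp [hnt1], by simp [htight1]⟩
          have h1 := Finset.card_lt_card hss
          have h2 := Finset.card_le_card hsupp_sub
          omega
      -- apply induction hypothesis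
      have hmN : measN f k mu' ≤ N := by omega
      obtain ⟨m, Xi, w, hw_pos, hw_sum, hXi_flat, hXi_inj, hXi_eq⟩ :=
        ih mu' hmN hmu'_dist hple'
      refine ⟨m + 1, Fin.cons unifS Xi, Fin.cons v (fun i => (1 - v) * w i),
        ?_, ?_, ?_, ?_, ?_⟩
      · intro i
        refine Fin.cases ?_ ?_ i
        · simpa using hv_pos
        · intro j
          simp only [Fin.cons_succ]
          exact mul_pos h1v (hw_pos j)
      · rw [Fin.sum_cons, ← Finset.mul_sum, hw_sum]
        ring
      · intro i
        refine Fin.cases ?_ ?_ i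
        · simpa using hflatS
        · intro j; simpa using hXi_flat j
      · intro i
        refine Fin.cases ?_ ?_ i
        · simpa using hinjS
        · intro j; simpa using hXi_inj j
      · intro a
        have hterm : ∀ i : Fin (m+1),
            (Fin.cons v (fun i => (1 - v) * w i) : Fin (m+1) → ℝ) i
              * (Fin.cons unifS Xi : Fin (m+1) → α → ℝ) i a
            = (Fin.cons (v * unifS a)
                (fun j => (1 - v) * w j * Xi j a) : Fin (m+1) → ℝ) i := by
          intro i
          refine Fin.cases ?_ ?_ i <;> simp [mul_assoc]
        rw [Finset.sum_congr rfl (fun i _ => hterm i), Fin.sum_cons,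
          hrecon a, hXi_eq a, Finset.mul_sum]
        congr 1
        apply Finset.sum_congr rfl
        intro j _
        ring

end DecompAux

theorem stmt_5
    (n1 n2 k : ℕ)
    (μX : BS n1 → ℝ) (hX : IsDist μX)
    (f : BS n1 → BS n2)
    (hk : mEntGe (pushD f μX) (k:ℝ)) :
    ∃ (m : ℕ) (Xi : Fin m → (BS n1 → ℝ)) (fi : Fin m → (BS n1 → BS n2)) (v : Fin m → ℝ),
      (∀ i, 0 < v i) ∧ (∑ i, v i = 1) ∧
      (∀ i, IsFlat k (Xi i)) ∧
      (∀ i, Set.InjOn (fi i) {a | Xi i a ≠ 0}) ∧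
      (∀ a, μX a = ∑ i, v i * Xi i a) ∧
      (∀ i, pushD f (Xi i) = pushD (fi i) (Xi i)) := by
  have hc : (2:ℝ) ^ (-(k:ℝ)) = ((2:ℝ)^k)⁻¹ := by
    rw [Real.rpow_neg (by norm_num : (0:ℝ) ≤ 2), Real.rpow_natCast]
  have hple : ∀ y, pushD f μX y ≤ ((2:ℝ)^k)⁻¹ := fun y => hc ▸ hk y
  obtain ⟨m, Xi, v, hv, hsum, hflat, hinj, heq⟩ :=
    decomp_aux f k (measN f k μX) μX le_rfl hX hple
  exact ⟨m, Xi, fun _ => f, v, hv, hsum, hflat, hinj, heq, fun _ => rfl⟩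


end
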